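/- Suppose all entries of all matrices in a finite set 𝒜 ⊂ SL₂(ℝ) are algebraic numbers. Then 𝒜 is Diophantine: there exists c > 0 such that for all n and all A₁,…,Aₙ, A'₁,…,A'ₙ ∈ 𝒜, if A₁⋯Aₙ ≠ A'₁⋯A'ₙ then ‖A₁⋯Aₙ − A'₁⋯A'ₙ‖ > cⁿ. -/

import Mathlib

open Matrix

/-- The Frobenius norm of a `2×2` real matrix (any fixed matrix norm works). -/
noncomputable def mnorm (M : Matrix (Fin 2) (Fin 2) ℝ) : ℝ :=
  Real.sqrt (∑ i : Fin 2, ∑ j : Fin 2, (M i j) ^ 2)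

set_option maxHeartbeats 1000000
set_option synthInstance.maxHeartbeats 400000

lemma abs_entry_le_mnorm (M : Matrix (Fin 2) (Fin 2) ℝ) (i j : Fin 2) :
    |M i j| ≤ mnorm M := by
  rw [← Real.sqrt_sq_eq_abs]
  apply Real.sqrt_le_sqrt
  calc M i j ^ 2 ≤ ∑ j' : Fin 2, (M i j') ^ 2 :=
        Finset.single_le_sum (fun k _ => sq_nonneg (M i k)) (Finset.mem_univ j)
    _ ≤ ∑ i' : Fin 2, ∑ j' : Fin 2, (M i' j') ^ 2 :=
        Finset.single_le_sum (fun k _ => Finset.sum_nonneg fun l _ => sq_nonneg (M k l))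
          (Finset.mem_univ i)

lemma list_prod_smul {R : Type*} [CommRing R] (c : R)
    (l : List (Matrix (Fin 2) (Fin 2) R)) :
    (l.map (fun A => c • A)).prod = c ^ l.length • l.prod := by
  induction l with
  | nil => simp
  | cons a t ih =>
    simp only [List.map_cons, List.prod_cons, ih, List.length_cons]
    rw [smul_mul_assoc, mul_smul_comm, smul_smul, pow_succ, mul_comm (c ^ t.length) c]

lemma prod_entry_bound (M : ℝ) (hM : 1 ≤ M) (l : List (Matrix (Fin 2) (Fin 2) ℂ))
    (h : ∀ A ∈ l, ∀ i j, ‖A i j‖ ≤ M) (i j : Fin 2) :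
    ‖l.prod i j‖ ≤ (2 * M) ^ l.length := by
  induction l generalizing i j with
  | nil =>
    simp only [List.prod_nil, List.length_nil, pow_zero]
    by_cases hij : i = j
    · subst hij; simp [Matrix.one_apply_eq]
    · simp [Matrix.one_apply_ne hij]
  | cons a t ih =>
    have ha := h a (List.mem_cons_self)
    have ht : ∀ A ∈ t, ∀ i j, ‖A i j‖ ≤ M := fun A hA => h A (List.mem_cons_of_mem _ hA)
    simp only [List.prod_cons, List.length_cons]
    rw [Matrix.mul_apply]
    calc ‖∑ k, a i k * t.prod k j‖
        ≤ ∑ k, ‖a i k * t.prod k j‖ := norm_sum_le _ _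
      _ ≤ ∑ _k : Fin 2, M * (2 * M) ^ t.length := by
          apply Finset.sum_le_sum
          intro k _
          rw [norm_mul]
          exact mul_le_mul (ha i k) (ih ht k j) (norm_nonneg _)
            (le_trans zero_le_one hM)
      _ = (2 * M) ^ (t.length + 1) := by
          rw [Finset.sum_const, Finset.card_univ, Fintype.card_fin, pow_succ]
          ring


/-- If all entries of all matrices in a finite set `𝒜 ⊂ SL₂(ℝ)` are
algebraic numbers, then `𝒜` is Diophantine: there is `c > 0` such that any two distinct
products of length `n` of elements of `𝒜` are at distance greater than `cⁿ`. -/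
theorem algebraic_entries_implies_diophantine
    (𝒜 : Finset (Matrix (Fin 2) (Fin 2) ℝ))
    (hdet : ∀ A ∈ 𝒜, A.det = 1)
    (halg : ∀ A ∈ 𝒜, ∀ i j, IsAlgebraic ℚ (A i j)) :
    ∃ c > (0 : ℝ), ∀ n : ℕ, ∀ A B : Fin n → Matrix (Fin 2) (Fin 2) ℝ,
      (∀ i, A i ∈ 𝒜) → (∀ i, B i ∈ 𝒜) →
      (List.ofFn A).prod ≠ (List.ofFn B).prod →
      c ^ n < mnorm ((List.ofFn A).prod - (List.ofFn B).prod) := by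
  classical
  -- the finite set of entries
  set S : Finset ℝ := 𝒜.biUnion
    (fun A => Finset.image (fun p : Fin 2 × Fin 2 => A p.1 p.2) Finset.univ) with hSdef
  have hmemS : ∀ A ∈ 𝒜, ∀ i j, A i j ∈ S := by
    intro A hA i j
    rw [hSdef, Finset.mem_biUnion]
    exact ⟨A, hA, Finset.mem_image.2 ⟨(i, j), Finset.mem_univ _, rfl⟩⟩
  have hSalg : ∀ x ∈ (S : Set ℝ), IsIntegral ℚ x := by
    intro x hx
    rw [Finset.mem_coe, hSdef, Finset.mem_biUnion] at hx
    obtain ⟨A, hA, hx⟩ := hx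
    obtain ⟨⟨i, j⟩, _, rfl⟩ := Finset.mem_image.1 hx
    exact (halg A hA i j).isIntegral
  -- the number field K
  set K : IntermediateField ℚ ℝ := IntermediateField.adjoin ℚ (S : Set ℝ) with hKdef
  haveI hfd : FiniteDimensional ℚ K :=
    IntermediateField.finiteDimensional_adjoin hSalg
  have hmemK : ∀ x ∈ S, x ∈ K := fun x hx =>
    IntermediateField.subset_adjoin ℚ (S : Set ℝ) (Finset.mem_coe.2 hx)
  -- common denominator
  have hden : ∀ z : K, ∃ y : ℤ, 0 < y ∧ IsIntegral ℤ ((y : K) * z) := by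
    intro z
    have halgz : IsAlgebraic ℤ z := by
      rw [IsFractionRing.isAlgebraic_iff ℤ ℚ K]
      exact Algebra.IsAlgebraic.isAlgebraic z
    obtain ⟨y, hy0, hyint⟩ := halgz.exists_integral_multiple
    have hxy' : IsIntegral ℤ ((y : K) * z) := by rw [← zsmul_eq_mul]; exact hyint
    rcases lt_or_gt_of_ne hy0 with hneg | hpos
    · refine ⟨-y, by omega, ?_⟩
      have h2 : ((-y : ℤ) : K) * z = -((y : K) * z) := by push_cast; ring
      rw [h2]
      exact hxy'.neg
    · exact ⟨y, hpos, hxy'⟩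
  choose dfun hdpos hdint using hden
  -- the element of K corresponding to s ∈ S
  let elK : {x // x ∈ S} → K := fun s => ⟨s.1, hmemK s.1 s.2⟩
  set d : ℤ := ∏ s ∈ S.attach, dfun (elK s) with hddef
  have hd1 : 1 ≤ d := by
    rw [hddef]
    have := Finset.prod_pos (fun s (_ : s ∈ S.attach) => hdpos (elK s))
    omega
  have hdintS : ∀ s : {x // x ∈ S}, IsIntegral ℤ ((d : K) * elK s) := by
    intro s
    have hsplit : d = dfun (elK s) * ∏ t ∈ S.attach.erase s, dfun (elK t) :=
      (Finset.mul_prod_erase S.attach _ (Finset.mem_attach _ _)).symm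
    have : (d : K) * elK s =
        ((∏ t ∈ S.attach.erase s, dfun (elK t) : ℤ) : K) * ((dfun (elK s) : K) * elK s) := by
      rw [hsplit]; push_cast; ring
    rw [this]
    exact (isIntegral_algebraMap (x := (∏ t ∈ S.attach.erase s, dfun (elK t) : ℤ))).mul
      (hdint (elK s))
  haveI : Algebra.IsSeparable ℚ K := inferInstance
  set D : ℕ := Fintype.card (K →ₐ[ℚ] ℂ) with hDdef
  set M : ℝ := 1 + ∑ σ : K →ₐ[ℚ] ℂ, ∑ s ∈ S.attach,
      ‖σ ((d : K) * elK s)‖ with hMdef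
  have hM1 : 1 ≤ M := by
    rw [hMdef]
    have : (0:ℝ) ≤ ∑ σ : K →ₐ[ℚ] ℂ, ∑ s ∈ S.attach, ‖σ ((d : K) * elK s)‖ :=
      Finset.sum_nonneg fun σ _ => Finset.sum_nonneg fun s _ => norm_nonneg _
    linarith
  have hMb : ∀ σ : K →ₐ[ℚ] ℂ, ∀ s : {x // x ∈ S},
      ‖σ ((d : K) * elK s)‖ ≤ M := by
    intro σ s
    rw [hMdef]
    have h1 : ‖σ ((d : K) * elK s)‖ ≤
        ∑ t ∈ S.attach, ‖σ ((d : K) * elK t)‖ :=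
      Finset.single_le_sum (f := fun t => ‖σ ((d : K) * elK t)‖)
        (fun t _ => norm_nonneg _) (Finset.mem_attach _ _)
    have h2 : ∑ t ∈ S.attach, ‖σ ((d : K) * elK t)‖ ≤
        ∑ τ : K →ₐ[ℚ] ℂ, ∑ t ∈ S.attach, ‖τ ((d : K) * elK t)‖ :=
      Finset.single_le_sum
        (f := fun τ : K →ₐ[ℚ] ℂ => ∑ t ∈ S.attach, ‖τ ((d : K) * elK t)‖)
        (fun τ _ => Finset.sum_nonneg fun t _ => norm_nonneg _) (Finset.mem_univ σ)
    linarith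
  -- the constant
  have hdR : (1:ℝ) ≤ (d:ℝ) := by exact_mod_cast hd1
  have h4M : (0:ℝ) < 4 * M := by linarith
  refine ⟨1 / (2 * (d : ℝ) * (4 * M) ^ D), by positivity, ?_⟩
  intro n A B hA hB hne
  rcases Nat.eq_zero_or_pos n with rfl | hn
  · simp at hne
  -- matrices over K
  let AK : Fin n → Matrix (Fin 2) (Fin 2) K := fun i =>
    Matrix.of fun p q => (⟨A i p q, hmemK _ (hmemS _ (hA i) p q)⟩ : K)
  let BK : Fin n → Matrix (Fin 2) (Fin 2) K := fun i =>
    Matrix.of fun p q => (⟨B i p q, hmemK _ (hmemS _ (hB i) p q)⟩ : K)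
  let f : K →+* ℝ := algebraMap K ℝ
  have hPA : f.mapMatrix (List.ofFn AK).prod = (List.ofFn A).prod := by
    rw [map_list_prod, List.map_ofFn]
    congr 1
  have hPB : f.mapMatrix (List.ofFn BK).prod = (List.ofFn B).prod := by
    rw [map_list_prod, List.map_ofFn]
    congr 1
  obtain ⟨p, q, hpq⟩ : ∃ p q,
      (List.ofFn AK).prod p q ≠ (List.ofFn BK).prod p q := by
    by_contra h
    push_neg at h
    exact hne (by rw [← hPA, ← hPB, Matrix.ext h])
  set x : K := (List.ofFn AK).prod p q - (List.ofFn BK).prod p q with hxdef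
  have hx : x ≠ 0 := sub_ne_zero.mpr hpq
  -- matrices over the ring of integers
  let O := integralClosure ℤ K
  let AO : Fin n → Matrix (Fin 2) (Fin 2) O := fun i =>
    Matrix.of fun p' q' =>
      (⟨(d : K) * AK i p' q', hdintS ⟨A i p' q', hmemS _ (hA i) p' q'⟩⟩ : O)
  let BO : Fin n → Matrix (Fin 2) (Fin 2) O := fun i =>
    Matrix.of fun p' q' =>
      (⟨(d : K) * BK i p' q', hdintS ⟨B i p' q', hmemS _ (hB i) p' q'⟩⟩ : O)
  let g : O →+* K := algebraMap O K
  have hprodAO : g.mapMatrix ((List.ofFn AO).prod) = ((d : K)) ^ n • (List.ofFn AK).prod := by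
    rw [map_list_prod, List.map_ofFn]
    have h1 : List.ofFn (⇑g.mapMatrix ∘ AO) = (List.ofFn AK).map (fun Mt => (d : K) • Mt) := by
      rw [List.map_ofFn]
      congr 1
    rw [h1, list_prod_smul, List.length_ofFn]
  have hprodBO : g.mapMatrix ((List.ofFn BO).prod) = ((d : K)) ^ n • (List.ofFn BK).prod := by
    rw [map_list_prod, List.map_ofFn]
    have h1 : List.ofFn (⇑g.mapMatrix ∘ BO) = (List.ofFn BK).map (fun Mt => (d : K) • Mt) := by
      rw [List.map_ofFn]
      congr 1
    rw [h1, list_prod_smul, List.length_ofFn]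
  set yO : O := (List.ofFn AO).prod p q - (List.ofFn BO).prod p q with hyOdef
  have hyO : (yO : K) = (d : K) ^ n * x := by
    have hA' := congrArg (fun Mt : Matrix (Fin 2) (Fin 2) K => Mt p q) hprodAO
    have hB' := congrArg (fun Mt : Matrix (Fin 2) (Fin 2) K => Mt p q) hprodBO
    simp only [RingHom.mapMatrix_apply, Matrix.map_apply, Matrix.smul_apply, smul_eq_mul] at hA' hB'
    have : (yO : K) = g ((List.ofFn AO).prod p q) - g ((List.ofFn BO).prod p q) := by
      rw [hyOdef]; push_cast; rfl
    rw [this, hA', hB', hxdef]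
    ring
  have hdK : ((d : K)) ≠ 0 := by
    have : (d : ℝ) ≠ 0 := by positivity
    intro h
    apply this
    exact_mod_cast congrArg (algebraMap K ℝ) h
  have hyO0 : yO ≠ 0 := by
    intro h
    apply hx
    have h2 : (yO : K) = 0 := by rw [h]; rfl
    rw [hyO] at h2
    exact (mul_eq_zero.1 h2).resolve_left (pow_ne_zero n hdK)
  -- the norm of yO is a nonzero rational integer
  set q0 : ℚ := Algebra.norm ℚ (yO : K) with hq0def
  have hq0 : q0 ≠ 0 := by
    rw [hq0def]
    rw [Algebra.norm_ne_zero_iff]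
    exact fun h => hyO0 (Subtype.ext (by rw [h]; rfl))
  have hq0int : IsIntegral ℤ q0 := Algebra.isIntegral_norm ℚ yO.2
  obtain ⟨z, hz⟩ := IsIntegrallyClosed.isIntegral_iff.mp hq0int
  have hz0 : z ≠ 0 := by
    intro h
    apply hq0
    rw [← hz, h, map_zero]
  have h1q : (1:ℝ) ≤ |(q0 : ℝ)| := by
    have : (1:ℚ) ≤ |q0| := by
      rw [← hz]
      have : algebraMap ℤ ℚ z = (z : ℚ) := by norm_cast
      rw [this, ← Int.cast_abs]
      exact_mod_cast Int.one_le_abs hz0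
    calc (1:ℝ) = ((1:ℚ):ℝ) := by norm_num
      _ ≤ ((|q0|:ℚ):ℝ) := by exact_mod_cast this
      _ = |(q0:ℝ)| := by push_cast; ring
  have hprodemb : |(q0 : ℝ)| = ∏ σ : K →ₐ[ℚ] ℂ, ‖σ (yO : K)‖ := by
    have h1 : algebraMap ℚ ℂ q0 = ∏ σ : K →ₐ[ℚ] ℂ, σ (yO : K) :=
      Algebra.norm_eq_prod_embeddings ℚ ℂ _
    have h2 : ‖algebraMap ℚ ℂ q0‖ = |(q0 : ℝ)| := by
      rw [eq_ratCast (algebraMap ℚ ℂ) q0]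
      rw [show ((q0:ℂ)) = (((q0:ℝ):ℝ):ℂ) by push_cast; ring, Complex.norm_real, Real.norm_eq_abs]
    rw [← h2, h1, Complex.norm_prod]
  -- bound the image of yO under each embedding
  have h2M1 : (1:ℝ) ≤ 2 * M := by linarith
  have hbound : ∀ σ : K →ₐ[ℚ] ℂ, ‖σ (yO : K)‖ ≤ (4 * M) ^ n := by
    intro σ
    let τ : O →+* ℂ := (σ : K →+* ℂ).comp g
    have hyOτ : σ (yO : K) =
        τ ((List.ofFn AO).prod p q) - τ ((List.ofFn BO).prod p q) := by
      rw [hyOdef]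
      push_cast
      rw [map_sub]
      rfl
    have hAbound : ‖τ.mapMatrix ((List.ofFn AO).prod) p q‖ ≤ (2 * M) ^ n := by
      rw [map_list_prod, List.map_ofFn]
      have := prod_entry_bound M hM1 (List.ofFn (⇑τ.mapMatrix ∘ AO)) ?_ p q
      · simpa using this
      · intro C hC i' j'
        obtain ⟨i, rfl⟩ := List.mem_ofFn.1 hC
        exact hMb σ ⟨A i i' j', hmemS _ (hA i) i' j'⟩
    have hBbound : ‖τ.mapMatrix ((List.ofFn BO).prod) p q‖ ≤ (2 * M) ^ n := by
      rw [map_list_prod, List.map_ofFn]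
      have := prod_entry_bound M hM1 (List.ofFn (⇑τ.mapMatrix ∘ BO)) ?_ p q
      · simpa using this
      · intro C hC i' j'
        obtain ⟨i, rfl⟩ := List.mem_ofFn.1 hC
        exact hMb σ ⟨B i i' j', hmemS _ (hB i) i' j'⟩
    have hττ : τ.mapMatrix ((List.ofFn AO).prod) p q = τ ((List.ofFn AO).prod p q) := rfl
    have hττ' : τ.mapMatrix ((List.ofFn BO).prod) p q = τ ((List.ofFn BO).prod p q) := rfl
    rw [hττ] at hAbound
    rw [hττ'] at hBbound
    have htri : ‖σ (yO : K)‖ ≤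
        ‖τ ((List.ofFn AO).prod p q)‖ +
        ‖τ ((List.ofFn BO).prod p q)‖ := by
      rw [hyOτ]
      exact norm_sub_le _ _
    have h2n : (2:ℝ) ≤ 2 ^ n := by
      calc (2:ℝ) = 2^1 := (pow_one 2).symm
        _ ≤ 2^n := pow_le_pow_right₀ (by norm_num) hn
    have h2Mn : (1:ℝ) ≤ (2*M) ^ n := one_le_pow₀ h2M1
    have h4 : (4 * M) ^ n = 2 ^ n * (2 * M) ^ n := by
      rw [← mul_pow]; ring_nf
    nlinarith [htri, hAbound, hBbound]
  -- the real embedding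
  set σ0 : K →ₐ[ℚ] ℂ := (Complex.ofRealHom.comp f).toRatAlgHom with hσ0def
  have hfd' : f ((d : K)) = (d : ℝ) := map_intCast f d
  have habsσ0 : ‖σ0 (yO : K)‖ = (d:ℝ)^n * |f x| := by
    have h1 : σ0 (yO : K) = ((f (yO : K) : ℝ) : ℂ) := rfl
    rw [h1, Complex.norm_real, Real.norm_eq_abs, hyO, _root_.map_mul, _root_.map_pow, hfd', abs_mul, abs_pow,
      abs_of_nonneg (by positivity : (0:ℝ) ≤ (d:ℝ))]
  -- combine: 1 ≤ |q0| = ∏ |σ yO| ≤ |σ0 yO| * (4M)^(n*D)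
  have h4Mn1 : (1:ℝ) ≤ (4*M)^n := one_le_pow₀ (by linarith)
  have hsplit : ∏ σ : K →ₐ[ℚ] ℂ, ‖σ (yO : K)‖ =
      ‖σ0 (yO : K)‖ * ∏ σ ∈ Finset.univ.erase σ0, ‖σ (yO : K)‖ :=
    (Finset.mul_prod_erase Finset.univ _ (Finset.mem_univ σ0)).symm
  have herase : ∏ σ ∈ Finset.univ.erase σ0, ‖σ (yO : K)‖ ≤ ((4*M)^n)^D := by
    calc ∏ σ ∈ Finset.univ.erase σ0, ‖σ (yO : K)‖
        ≤ ∏ _σ ∈ Finset.univ.erase σ0, (4*M)^n :=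
          Finset.prod_le_prod (fun σ _ => norm_nonneg _) (fun σ _ => hbound σ)
      _ = ((4*M)^n) ^ (Finset.univ.erase σ0).card := by rw [Finset.prod_const]
      _ ≤ ((4*M)^n) ^ D := by
          apply pow_le_pow_right₀ h4Mn1
          rw [hDdef]
          exact le_trans Finset.card_erase_le (le_of_eq Finset.card_univ)
  have hkey : (1:ℝ) ≤ (d:ℝ)^n * |f x| * ((4*M)^n)^D := by
    have h0 : (0:ℝ) ≤ ‖σ0 (yO : K)‖ := norm_nonneg _
    calc (1:ℝ) ≤ |(q0 : ℝ)| := h1q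
      _ = ‖σ0 (yO : K)‖ * ∏ σ ∈ Finset.univ.erase σ0, ‖σ (yO : K)‖ := by
          rw [hprodemb, hsplit]
      _ ≤ ‖σ0 (yO : K)‖ * ((4*M)^n)^D := by
          apply mul_le_mul_of_nonneg_left herase h0
      _ = (d:ℝ)^n * |f x| * ((4*M)^n)^D := by rw [habsσ0]
  -- the entry of the real difference equals f x
  have hentry : ((List.ofFn A).prod - (List.ofFn B).prod) p q = f x := by
    rw [← hPA, ← hPB, hxdef, map_sub]
    rfl
  have hmn : |f x| ≤ mnorm ((List.ofFn A).prod - (List.ofFn B).prod) := by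
    rw [← hentry] at *
    exact abs_entry_le_mnorm _ p q
  -- final arithmetic
  have hdn : (0:ℝ) < (d:ℝ)^n := by positivity
  have h4MnD : (0:ℝ) < ((4*M)^n)^D := pow_pos (pow_pos h4M n) D
  have hfx0 : (0:ℝ) < |f x| := by
    rcases lt_or_eq_of_le (abs_nonneg (f x)) with h | h
    · exact h
    · exfalso
      rw [← h, mul_zero, zero_mul] at hkey
      linarith
  have h2n : (1:ℝ) < 2 ^ n := by
    calc (1:ℝ) < 2 := one_lt_two
      _ = 2^1 := (pow_one 2).symm
      _ ≤ 2^n := pow_le_pow_right₀ one_le_two hn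
  have hpowsw : ((4*M)^D)^n = ((4*M)^n)^D := by rw [← pow_mul, ← pow_mul, Nat.mul_comm D n]
  calc (1 / (2 * (d:ℝ) * (4*M)^D)) ^ n
      = 1 / (2^n * (d:ℝ)^n * ((4*M)^n)^D) := by
        rw [div_pow, one_pow, mul_pow, mul_pow, hpowsw]
    _ < |f x| := by
        rw [div_lt_iff₀ (mul_pos (mul_pos (pow_pos two_pos n) hdn) h4MnD)]
        calc (1:ℝ) < 2^n := h2n
          _ = 2^n * 1 := (mul_one _).symm
          _ ≤ 2^n * ((d:ℝ)^n * |f x| * ((4*M)^n)^D) := by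
              apply mul_le_mul_of_nonneg_left hkey (le_of_lt (pow_pos two_pos n))
          _ = |f x| * (2^n * (d:ℝ)^n * ((4*M)^n)^D) := by ring
    _ ≤ mnorm ((List.ofFn A).prod - (List.ofFn B).prod) := hmn
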